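/- Let G be the group whose underlying set is ℝ⁴ with multiplication (x₁, x₂, x₃, x₄)·(y₁, y₂, y₃, y₄) = (x₁ + y₁·e^{x₄}, x₂ + y₂ + x₄·y₃, x₃ + y₃, x₄ + y₄). Let f : ℝ → ℝ be a continuous function with f(0) = 0. Then the subgroup of G generated by the set { (x, y, z, f(z)) : x, y, z ∈ ℝ } is all of G if and only if there is no l ∈ ℝ with f(z) = l·z for all z ∈ ℝ. -/

import Mathlib

/-- The underlying set `ℝ⁴` of the group `G`. -/
@[ext] structure G8 where
  x1 : ℝ
  x2 : ℝ
  x3 : ℝ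
  x4 : ℝ

namespace G8

/-- `(x₁,x₂,x₃,x₄)·(y₁,y₂,y₃,y₄) = (x₁ + y₁e^{x₄}, x₂ + y₂ + x₄y₃, x₃ + y₃, x₄ + y₄)`. -/
noncomputable def gmul (a b : G8) : G8 :=
  ⟨a.x1 + b.x1 * Real.exp a.x4, a.x2 + b.x2 + a.x4 * b.x3, a.x3 + b.x3, a.x4 + b.x4⟩

/-- The identity element. -/
def gone : G8 := ⟨0, 0, 0, 0⟩

/-- Inversion. -/
noncomputable def ginv (a : G8) : G8 :=
  ⟨-a.x1 * Real.exp (-a.x4), -a.x2 + a.x4 * a.x3, -a.x3, -a.x4⟩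

noncomputable instance : Group G8 where
  mul := gmul
  one := gone
  inv := ginv
  mul_assoc a b c := by
    show gmul (gmul a b) c = gmul a (gmul b c)
    simp only [gmul, Real.exp_add, mk.injEq]
    refine ⟨by ring, by ring, by ring, by ring⟩
  one_mul a := by
    show gmul gone a = a
    simp [gmul, gone]
  mul_one a := by
    show gmul a gone = a
    simp [gmul, gone]
  inv_mul_cancel a := by
    show gmul (ginv a) a = gone
    simp only [gmul, ginv, gone, mk.injEq, ← Real.exp_add]
    refine ⟨by simp, by ring, by ring, by ring⟩

end G8

namespace G8

lemma mul_def (a b : G8) : a * b = gmul a b := rfl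
lemma inv_def (a : G8) : a⁻¹ = ginv a := rfl
lemma one_def : (1 : G8) = gone := rfl

end G8

/-- The set `{(x, y, z, f(z)) : x, y, z ∈ ℝ}` generates `G` if and only if `f` is
not linear. -/
theorem section_generates_iff_nonlinear (f : ℝ → ℝ) (hf : Continuous f) (hf0 : f 0 = 0) :
    Subgroup.closure {g : G8 | ∃ x y z : ℝ, g = ⟨x, y, z, f z⟩} = ⊤ ↔
      ¬ ∃ l : ℝ, ∀ z : ℝ, f z = l * z := by
  set S : Set G8 := {g : G8 | ∃ x y z : ℝ, g = ⟨x, y, z, f z⟩} with hSdef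
  set H : Subgroup G8 := Subgroup.closure S with hHdef
  constructor
  · rintro htop ⟨l, hl⟩
    -- the subgroup {g | g.x4 = l * g.x3} contains S but is proper
    set Hl : Subgroup G8 :=
      { carrier := {g : G8 | g.x4 = l * g.x3}
        mul_mem' := by
          rintro a b (ha : a.x4 = l * a.x3) (hb : b.x4 = l * b.x3)
          show (G8.gmul a b).x4 = l * (G8.gmul a b).x3
          simp [G8.gmul, ha, hb]; ring
        one_mem' := by show (G8.gone).x4 = l * (G8.gone).x3; simp [G8.gone]
        inv_mem' := by
          rintro a (ha : a.x4 = l * a.x3)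
          show (G8.ginv a).x4 = l * (G8.ginv a).x3
          simp [G8.ginv, ha] } with hHl
    have hle : H ≤ Hl := by
      rw [hHdef]
      apply Subgroup.closure_le _ |>.mpr
      rintro g ⟨x, y, z, rfl⟩
      show f z = l * z
      exact hl z
    rw [htop] at hle
    have h1 : (⟨0, 0, 0, 1⟩ : G8) ∈ Hl := hle (Subgroup.mem_top _)
    have : (1 : ℝ) = l * 0 := h1
    simp at this
  · intro hnl
    -- basic members
    have hS : ∀ x y z : ℝ, (⟨x, y, z, f z⟩ : G8) ∈ H :=
      fun x y z => Subgroup.subset_closure ⟨x, y, z, rfl⟩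
    have hN : ∀ u v : ℝ, (⟨u, v, 0, 0⟩ : G8) ∈ H := by
      intro u v
      have := hS u v 0
      rwa [hf0] at this
    -- adjusting first two coordinates
    have hB : ∀ m : G8, m ∈ H → ∀ u v : ℝ, (⟨u, v, m.x3, m.x4⟩ : G8) ∈ H := by
      intro m hm u v
      have h := H.mul_mem (hN (u - m.x1) (v - m.x2)) hm
      have he : (⟨u - m.x1, v - m.x2, 0, 0⟩ : G8) * m = ⟨u, v, m.x3, m.x4⟩ := by
        simp [G8.mul_def, G8.gmul]
      rwa [he] at h
    -- the additive subgroup of achievable fourth coordinates with third coordinate 0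
    set T : AddSubgroup ℝ :=
      { carrier := {r : ℝ | ∃ g ∈ H, g.x3 = 0 ∧ g.x4 = r}
        zero_mem' := ⟨1, H.one_mem, rfl, rfl⟩
        add_mem' := by
          rintro r r' ⟨g, hg, hg3, hg4⟩ ⟨g', hg', hg'3, hg'4⟩
          refine ⟨g * g', H.mul_mem hg hg', ?_, ?_⟩
          · show (G8.gmul g g').x3 = 0
            simp [G8.gmul, hg3, hg'3]
          · show (G8.gmul g g').x4 = r + r'
            simp [G8.gmul, hg4, hg'4]
        neg_mem' := by
          rintro r ⟨g, hg, hg3, hg4⟩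
          refine ⟨g⁻¹, H.inv_mem hg, ?_, ?_⟩
          · show (G8.ginv g).x3 = 0
            simp [G8.ginv, hg3]
          · show (G8.ginv g).x4 = -r
            simp [G8.ginv, hg4] } with hTdef
    have hT1 : ∀ z w : ℝ, f z + f w - f (z + w) ∈ T := by
      intro z w
      refine ⟨(⟨0, 0, z, f z⟩ : G8) * ⟨0, 0, w, f w⟩ * (⟨0, 0, z + w, f (z + w)⟩ : G8)⁻¹,
        H.mul_mem (H.mul_mem (hS 0 0 z) (hS 0 0 w)) (H.inv_mem (hS 0 0 (z + w))), ?_, ?_⟩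
      · show (G8.gmul (G8.gmul _ _) (G8.ginv _)).x3 = 0
        simp [G8.gmul, G8.ginv]
      · show (G8.gmul (G8.gmul _ _) (G8.ginv _)).x4 = f z + f w - f (z + w)
        simp [G8.gmul, G8.ginv]; ring
    -- f is not additive
    have hadd : ∃ z w : ℝ, f (z + w) ≠ f z + f w := by
      by_contra h
      push_neg at h
      apply hnl
      let F : ℝ →+ ℝ := AddMonoidHom.mk' f h
      have hL := (F.toRealLinearMap hf).map_smul
      refine ⟨f 1, fun z => ?_⟩
      have := hL z 1
      simp [F, AddMonoidHom.coe_toRealLinearMap] at this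
      -- this : f (z • 1) = z • f 1
      have h' : f z = z * f 1 := this
      rw [h', mul_comm]
    obtain ⟨z, w, hzw⟩ := hadd
    set c : ℝ := f z + f w - f (z + w) with hc
    have hc0 : c ≠ 0 := by
      intro h; apply hzw; linarith [hc ▸ h]
    -- IVT : T contains the interval uIcc 0 c
    have hIcc : ∀ y ∈ Set.uIcc (0 : ℝ) c, y ∈ T := by
      set g : ℝ → ℝ := fun t => f (t * z) + f (t * w) - f (t * z + t * w) with hg
      have hgc : Continuous g := by
        have h1 : Continuous fun t : ℝ => t * z := continuous_id.mul continuous_const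
        have h2 : Continuous fun t : ℝ => t * w := continuous_id.mul continuous_const
        exact ((hf.comp h1).add (hf.comp h2)).sub (hf.comp (h1.add h2))
      have hg0 : g 0 = 0 := by simp [hg, hf0]
      have hg1 : g 1 = c := by simp [hg, hc]
      intro y hy
      have : y ∈ Set.uIcc (g 0) (g 1) := by rwa [hg0, hg1]
      obtain ⟨t, _, ht⟩ := intermediate_value_uIcc hgc.continuousOn this
      rw [← ht]
      exact hT1 (t * z) (t * w)
    have habs : ∀ y : ℝ, |y| ≤ |c| → y ∈ T := by
      intro y hy
      have hy1 := abs_le.mp hy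
      rcases le_total 0 c with hcp | hcn
      · rw [abs_of_nonneg hcp] at hy1
        rcases le_total 0 y with hyp | hyn
        · exact hIcc y (Set.mem_uIcc.mpr (Or.inl ⟨hyp, hy1.2⟩))
        · have := hIcc (-y) (Set.mem_uIcc.mpr (Or.inl ⟨by linarith, by linarith⟩))
          simpa using T.neg_mem this
      · rw [abs_of_nonpos hcn] at hy1
        rcases le_total 0 y with hyp | hyn
        · have := hIcc (-y) (Set.mem_uIcc.mpr (Or.inr ⟨by linarith, by linarith⟩))
          simpa using T.neg_mem this
        · exact hIcc y (Set.mem_uIcc.mpr (Or.inr ⟨by linarith, by linarith⟩))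
    have hTall : ∀ r : ℝ, r ∈ T := by
      intro r
      obtain ⟨n, hn⟩ := exists_nat_ge (|r| / |c|)
      set m : ℕ := n + 1 with hm
      have hm0 : (0 : ℝ) < m := by positivity
      have hy : |r / m| ≤ |c| := by
        rw [abs_div, abs_of_pos hm0, div_le_iff₀ hm0]
        have hcpos : 0 < |c| := abs_pos.mpr hc0
        have : |r| / |c| ≤ m := by
          push_cast [hm]; push_cast at hn; linarith
        calc |r| = (|r| / |c|) * |c| := by field_simp
          _ ≤ (m : ℝ) * |c| := by nlinarith
          _ = |c| * m := by ring
      have hmem := AddSubgroup.nsmul_mem T (habs (r / m) hy) m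
      have : (m : ℝ) * (r / m) = r := by field_simp
      rwa [nsmul_eq_mul, this] at hmem
    -- conclude
    rw [eq_top_iff]
    rintro ⟨u, v, s, t⟩ -
    obtain ⟨g, hg, hg3, hg4⟩ := hTall (t - f s)
    have hmem : g * (⟨0, 0, s, f s⟩ : G8) ∈ H := H.mul_mem hg (hS 0 0 s)
    have h3 : (g * (⟨0, 0, s, f s⟩ : G8)).x3 = s := by
      show (G8.gmul g _).x3 = s; simp [G8.gmul, hg3]
    have h4 : (g * (⟨0, 0, s, f s⟩ : G8)).x4 = t := by
      show (G8.gmul g _).x4 = t; simp [G8.gmul, hg4]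
    have := hB _ hmem u v
    rwa [h3, h4] at this
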